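/- Let Q ⊆ ℝ^K be a nonempty closed convex set, let F : ℝ^K → ℝ^K be monotone on Q, let τ > 0, and let (δ_n) be a sequence of nonnegative reals with Σ_{n=1}^∞ δ_n/τ < ∞. Suppose s ∈ Q solves VI(Q, F), and suppose (p_n) is a sequence in Q such that for every n ≥ 1 and every y ∈ Q, ⟨F(p_n) + τ(p_n − p_{n−1}), y − p_n⟩ ≥ −δ_n. Then ‖p_n − p_{n−1}‖ → 0 as n → ∞, where ‖·‖ is the Euclidean norm. -/

import Mathlib

open scoped RealInnerProductSpace

/-- For a sequence of `δ_n`-inexact solutions of the successively regularized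
problems `VI(Q, F + τ(· − p_{n−1}))`, with `∑ δ_n/τ < ∞`, the successive
differences vanish: `‖p_n − p_{n−1}‖ → 0`. -/
theorem stmt19 (K : ℕ) (Q : Set (EuclideanSpace ℝ (Fin K))) (hQne : Q.Nonempty)
    (hQcl : IsClosed Q) (hQcv : Convex ℝ Q)
    (F : EuclideanSpace ℝ (Fin K) → EuclideanSpace ℝ (Fin K))
    (hF : ∀ x ∈ Q, ∀ y ∈ Q, 0 ≤ ⟪F x - F y, x - y⟫)
    (τ : ℝ) (hτ : 0 < τ)
    (δ : ℕ → ℝ) (hδ : ∀ n, 0 ≤ δ n) (hδs : Summable (fun n => δ n / τ))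
    (s : EuclideanSpace ℝ (Fin K)) (hs : s ∈ Q)
    (hsol : ∀ x ∈ Q, 0 ≤ ⟪F s, x - s⟫)
    (p : ℕ → EuclideanSpace ℝ (Fin K)) (hp : ∀ n, p n ∈ Q)
    (hpsol : ∀ n : ℕ, ∀ y ∈ Q,
        -δ (n + 1) ≤ ⟪F (p (n + 1)) + τ • (p (n + 1) - p n), y - p (n + 1)⟫) :
    Filter.Tendsto (fun n => ‖p (n + 1) - p n‖) Filter.atTop (nhds 0) := by
  set a : ℕ → ℝ := fun n => ‖p n - s‖ ^ 2 with ha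
  set b : ℕ → ℝ := fun n => ‖p (n + 1) - p n‖ ^ 2 with hb
  have key : ∀ n, ⟪p (n + 1) - p n, p (n + 1) - s⟫ ≤ δ (n + 1) / τ := by
    intro n
    have h1 := hpsol n s hs
    have h2 := hF (p (n + 1)) (hp (n + 1)) s hs
    have h3 := hsol (p (n + 1)) (hp (n + 1))
    rw [inner_add_left, real_inner_smul_left] at h1
    rw [inner_sub_left] at h2
    have e1 : s - p (n + 1) = -(p (n + 1) - s) := by abel
    rw [e1, inner_neg_right, inner_neg_right] at h1
    rw [le_div_iff₀ hτ]
    nlinarith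
  have bd : ∀ n, b n ≤ a n - a (n + 1) + 2 * (δ (n + 1) / τ) := by
    intro n
    have hid := norm_add_sq_real (p n - p (n + 1)) (p (n + 1) - s)
    have e2 : p n - p (n + 1) + (p (n + 1) - s) = p n - s := by abel
    rw [e2] at hid
    have e3 : p n - p (n + 1) = -(p (n + 1) - p n) := by abel
    rw [e3, inner_neg_left, norm_neg] at hid
    have := key n
    simp only [ha, hb]
    nlinarith
  have hδs' : Summable (fun n => δ (n + 1) / τ) := by
    exact (summable_nat_add_iff 1).mpr hδs
  have hbnn : ∀ n, 0 ≤ b n := fun n => sq_nonneg _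
  have hδnn : ∀ n, 0 ≤ δ (n + 1) / τ := fun n => div_nonneg (hδ _) hτ.le
  have hsumb : Summable b := by
    apply summable_of_sum_range_le hbnn (c := a 0 + 2 * ∑' n, δ (n + 1) / τ)
    intro n
    calc ∑ i ∈ Finset.range n, b i
        ≤ ∑ i ∈ Finset.range n, (a i - a (i + 1) + 2 * (δ (i + 1) / τ)) :=
          Finset.sum_le_sum fun i _ => bd i
      _ = (a 0 - a n) + 2 * ∑ i ∈ Finset.range n, (δ (i + 1) / τ) := by
          rw [Finset.sum_add_distrib, Finset.sum_range_sub' a, ← Finset.mul_sum]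
      _ ≤ a 0 + 2 * ∑' n, δ (n + 1) / τ := by
          have h1 : 0 ≤ a n := sq_nonneg _
          have h2 : ∑ i ∈ Finset.range n, (δ (i + 1) / τ) ≤ ∑' n, δ (n + 1) / τ :=
            Summable.sum_le_tsum _ (fun i _ => hδnn i) hδs'
          linarith
  have hbt : Filter.Tendsto b Filter.atTop (nhds 0) := hsumb.tendsto_atTop_zero
  have : Filter.Tendsto (fun n => Real.sqrt (b n)) Filter.atTop (nhds 0) := by
    have := (Real.continuous_sqrt.tendsto 0).comp hbt
    simpa [Function.comp_def] using this
  convert this using 2 with n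
  rw [hb, Real.sqrt_sq (norm_nonneg _)]
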